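/- In a star with center n and weak preferences, if object o_1 is reachable for the center agent n, then there exists a simple sequence of swaps (each leaf participates in at most one swap) ending with agent n holding o_1. -/

import Mathlib

/-- An assignment maps agents to objects bijectively (agents and objects are both `Fin n`;
object `o_i` is identified with index `i`, agent `i` initially holds `o_i`). -/
abbrev Assignment (n : ℕ) := Equiv.Perm (Fin n)

/-- A rational swap under weak preferences (`u j o` is agent `j`'s utility for object `o`,
so `o ⪰_j o'` iff `u j o ≥ u j o'`): two adjacent agents exchange objects, each receiving
an object at least as good as the one given up. -/
def WeakSwapStep {n : ℕ} (adj : Fin n → Fin n → Prop) (u : Fin n → Fin n → ℕ)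
    (σ σ' : Assignment n) : Prop :=
  ∃ a b : Fin n, adj a b ∧ u a (σ b) ≥ u a (σ a) ∧ u b (σ a) ≥ u b (σ b) ∧
    σ' = σ * Equiv.swap a b

/-- `σseq 0, σseq 1, …, σseq t` is a sequence of swaps under weak preferences. -/
def WeakSwapSeq {n : ℕ} (adj : Fin n → Fin n → Prop) (u : Fin n → Fin n → ℕ)
    (σseq : ℕ → Assignment n) (t : ℕ) : Prop :=
  ∀ m < t, WeakSwapStep adj u (σseq m) (σseq (m + 1))

/-- Adjacency of the star with center `c`: every other agent is a leaf adjacent only to `c`. -/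
def starAdj {n : ℕ} (c : Fin n) (i j : Fin n) : Prop := (i = c ∨ j = c) ∧ i ≠ j

/-- `σ` is reachable from the identity endowment via weak rational swaps. -/
def WReachableAssign {n : ℕ} (adj : Fin n → Fin n → Prop) (u : Fin n → Fin n → ℕ)
    (σ : Assignment n) : Prop :=
  ∃ t σseq, σseq 0 = 1 ∧ WeakSwapSeq adj u σseq t ∧ σseq t = σ

/-- Object `o` is reachable for agent `k` from the identity endowment via weak rational swaps. -/
def WReachableObj {n : ℕ} (adj : Fin n → Fin n → Prop) (u : Fin n → Fin n → ℕ)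
    (k o : Fin n) : Prop :=
  ∃ t σseq, σseq 0 = 1 ∧ WeakSwapSeq adj u σseq t ∧ σseq t k = o

/-- Normalized form of a star swap step: the center `c` swaps with a leaf `l`. -/
lemma star_step_normal {n : ℕ} {c : Fin n} {u : Fin n → Fin n → ℕ} {σ σ' : Assignment n}
    (h : WeakSwapStep (starAdj c) u σ σ') :
    ∃ l, l ≠ c ∧ u c (σ l) ≥ u c (σ c) ∧ u l (σ c) ≥ u l (σ l) ∧
      σ' = σ * Equiv.swap c l := by
  obtain ⟨a, b, ⟨hc, hne⟩, h1, h2, heq⟩ := h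
  rcases hc with rfl | rfl
  · exact ⟨b, fun hb => hne hb.symm, h1, h2, heq⟩
  · exact ⟨a, hne, h2, h1, by rwa [Equiv.swap_comm]⟩

/-- Invariant: any object not sitting at its original owner has visited the center. -/
lemma starHolderInv {n : ℕ} {c : Fin n} {u : Fin n → Fin n → ℕ} {σseq : ℕ → Assignment n} {t : ℕ}
    (h0 : σseq 0 = 1) (hs : WeakSwapSeq (starAdj c) u σseq t) :
    ∀ m ≤ t, ∀ o : Fin n, (σseq m)⁻¹ o ≠ o → ∃ j ≤ m, σseq j c = o := by
  intro m
  induction m with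
  | zero => intro _ o ho; rw [h0] at ho; simp at ho
  | succ m ih =>
    intro hm o ho
    obtain ⟨l, hl, _, _, heq⟩ := star_step_normal (hs m (by omega))
    by_cases h1 : (σseq m)⁻¹ o ≠ o
    · obtain ⟨j, hj, hjc⟩ := ih (by omega) o h1
      exact ⟨j, by omega, hjc⟩
    · push_neg at h1
      rw [heq, mul_inv_rev, Equiv.Perm.mul_apply, h1, Equiv.swap_inv] at ho
      have ho' : o = c ∨ o = l := by
        by_contra hcon
        push_neg at hcon
        exact ho (Equiv.swap_apply_of_ne_of_ne hcon.1 hcon.2)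
      rcases ho' with rfl | rfl
      · exact ⟨m, by omega, (Equiv.Perm.inv_eq_iff_eq.mp h1).symm⟩
      · refine ⟨m + 1, le_rfl, ?_⟩
        rw [heq, Equiv.Perm.mul_apply, Equiv.swap_apply_left]
        exact (Equiv.Perm.inv_eq_iff_eq.mp h1).symm
  
/-- Appending to a chain. -/
lemma chain_snoc {α : Type*} {R : α → α → Prop} : ∀ (l : List α) (a b : α),
    List.Chain R a l → R ((a :: l).getLast (by simp)) b → List.Chain R a (l ++ [b])
  | [], a, b, _, hr => List.Chain.cons hr List.Chain.nil
  | x :: xs, a, b, h, hr => by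
    cases h with
    | cons_cons hax hxs =>
      refine List.Chain.cons hax (chain_snoc xs x b hxs ?_)
      rwa [List.getLast_cons (by simp)] at hr

/-- Any object ever held by the center is the end of a nodup rational chain
of fresh-leaf trades. -/
lemma star_chain {n : ℕ} {c : Fin n} {u : Fin n → Fin n → ℕ} {σseq : ℕ → Assignment n} {t : ℕ}
    (h0 : σseq 0 = 1) (hs : WeakSwapSeq (starAdj c) u σseq t) :
    ∀ m ≤ t, ∀ o : Fin n, (∃ j ≤ m, σseq j c = o) →
      ∃ ls : List (Fin n), (c :: ls).Nodup ∧
        List.Chain (fun z w => u c w ≥ u c z ∧ u w z ≥ u w w) c ls ∧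
        (c :: ls).getLast (by simp) = o ∧
        ∀ w ∈ ls, ∃ j ≤ m, σseq j c = w := by
  intro m
  induction m with
  | zero =>
    rintro _ o ⟨j, hj, hjc⟩
    interval_cases j
    refine ⟨[], by simp, List.Chain.nil, ?_, by simp⟩
    rw [← hjc, h0]; simp
  | succ m ih =>
    rintro hm o ⟨j, hj, hjc⟩
    have weaken : ∀ o' : Fin n, (∃ j ≤ m, σseq j c = o') →
        ∃ ls : List (Fin n), (c :: ls).Nodup ∧
          List.Chain (fun z w => u c w ≥ u c z ∧ u w z ≥ u w w) c ls ∧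
          (c :: ls).getLast (by simp) = o' ∧
          ∀ w ∈ ls, ∃ j ≤ m + 1, σseq j c = w := by
      intro o' ho'
      obtain ⟨ls, hnd, hch, hlast, hmem⟩ := ih (by omega) o' ho'
      exact ⟨ls, hnd, hch, hlast, fun w hw => by
        obtain ⟨j', hj', hj'c⟩ := hmem w hw; exact ⟨j', by omega, hj'c⟩⟩
    rcases Nat.lt_or_ge j (m + 1) with hjm | hjm
    · exact weaken o ⟨j, by omega, hjc⟩
    · -- j = m + 1
      have hj' : j = m + 1 := by omega
      subst hj'
      obtain ⟨l, hl, hu1, hu2, heq⟩ := star_step_normal (hs m (by omega))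
      have hoc : o = σseq m l := by rw [← hjc, heq, Equiv.Perm.mul_apply, Equiv.swap_apply_left]
      by_cases hold : ∃ j' ≤ m, σseq j' c = o
      · exact weaken o hold
      · -- o has never been at the center, so it sits at its owner: l = o
        have hinv : (σseq m)⁻¹ o = l := by rw [hoc]; exact Equiv.symm_apply_apply _ _
        have hlo : l = o := by
          by_contra hne
          exact hold (starHolderInv h0 hs m (by omega) o (by rw [hinv]; exact hne))
        have hfix : σseq m l = l := hoc.symm.trans hlo.symm
        obtain ⟨ls, hnd, hch, hlast, hmem⟩ := ih (by omega) (σseq m c) ⟨m, le_rfl, rfl⟩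
        have honotin : o ∉ c :: ls := by
          intro hin
          rcases List.mem_cons.mp hin with rfl | hin'
          · exact hold ⟨0, by omega, by rw [h0]; rfl⟩
          · obtain ⟨j', hj', hj'c⟩ := hmem o hin'
            exact hold ⟨j', hj', hj'c⟩
        refine ⟨ls ++ [o], ?_, ?_, ?_, ?_⟩
        · rw [show c :: (ls ++ [o]) = (c :: ls) ++ [o] from rfl, List.nodup_append]
          refine ⟨hnd, List.nodup_singleton o, fun a ha b hb hab => ?_⟩
          rw [hab, List.mem_singleton.mp hb] at ha
          exact honotin ha
        · refine chain_snoc ls c o hch ?_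
          rw [hlast]
          constructor
          · rw [hoc]; exact hu1
          · rw [← hlo]
            simp only [hfix] at hu2
            exact hu2
        · simp
        · intro w hw
          rcases List.mem_append.mp hw with hw' | hw'
          · obtain ⟨j', hj', hj'c⟩ := hmem w hw'; exact ⟨j', by omega, hj'c⟩
          · rw [List.mem_singleton.mp hw']
            exact ⟨m + 1, le_rfl, hjc⟩

/-- Building a simple swap sequence out of a nodup rational chain. -/
lemma star_build {n : ℕ} {c o : Fin n} {u : Fin n → Fin n → ℕ} (ls : List (Fin n))
    (hnd : (c :: ls).Nodup)
    (hch : List.Chain (fun z w => u c w ≥ u c z ∧ u w z ≥ u w w) c ls)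
    (hlast : (c :: ls).getLast (by simp) = o) :
    ∃ t σseq, σseq 0 = 1 ∧ WeakSwapSeq (starAdj c) u σseq t ∧
      (∀ a : Fin n, a ≠ c →
        ((Finset.range t).filter (fun m => σseq (m + 1) a ≠ σseq m a)).card ≤ 1) ∧
      σseq t c = o := by
  classical
  set f : Fin n → Equiv.Perm (Fin n) := fun l => Equiv.swap c l with hf
  set τ : ℕ → Assignment n := fun m => ((ls.map f).take m).prod with hτ
  have hnd' : ls.Nodup := (List.nodup_cons.mp hnd).2
  have hcnot : c ∉ ls := (List.nodup_cons.mp hnd).1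
  -- fixed points away from used leaves
  have fixes : ∀ (L : List (Fin n)) (a : Fin n), a ≠ c → a ∉ L →
      ((L.map f).prod) a = a := by
    intro L
    induction L with
    | nil => intro a _ _; simp
    | cons x xs ihL =>
      intro a hac haxs
      simp only [List.map_cons, List.prod_cons, Equiv.Perm.mul_apply]
      rw [ihL a hac (fun h => haxs (List.mem_cons_of_mem _ h))]
      exact Equiv.swap_apply_of_ne_of_ne hac (fun h => haxs (h ▸ List.mem_cons_self))
  have fixes' : ∀ (m : ℕ) (a : Fin n), a ≠ c → a ∉ ls.take m → τ m a = a := by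
    intro m a hac hnotin
    have : τ m = ((ls.take m).map f).prod := by rw [hτ]; simp only [List.map_take]
    rw [this]
    exact fixes _ a hac hnotin
  -- step structure
  have hstep : ∀ m (hm : m < ls.length), τ (m + 1) = τ m * Equiv.swap c ls[m] := by
    intro m hm
    rw [hτ]
    simp only
    rw [List.prod_take_succ _ m (by simpa using hm), List.getElem_map]
  -- getElem m of ls is not in take m
  have hgetnot : ∀ m (hm : m < ls.length), ls[m] ∉ ls.take m := by
    intro m hm hin
    obtain ⟨i, hi, hieq⟩ := List.mem_iff_getElem.mp hin
    have hi' : i < m := by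
      have := hi; rw [List.length_take] at this; omega
    rw [List.getElem_take] at hieq
    have := (List.Nodup.getElem_inj_iff hnd').mp hieq
    omega
  -- center object
  have hcenter : ∀ m, m ≤ ls.length → τ m c = (c :: ls).getD m c := by
    intro m
    induction m with
    | zero => intro _; simp [hτ]
    | succ m ihm =>
      intro hm
      have hm' : m < ls.length := by omega
      rw [hstep m hm', Equiv.Perm.mul_apply, Equiv.swap_apply_left]
      rw [fixes' m ls[m] (fun h => hcnot (h ▸ List.getElem_mem hm')) (hgetnot m hm')]
      simp [List.getD_cons_succ, List.getD_eq_getElem ls c hm', List.getElem?_eq_getElem hm']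
  -- chain facts
  have hR : ∀ m (hm : m < ls.length),
      u c ls[m] ≥ u c ((c :: ls).getD m c) ∧ u ls[m] ((c :: ls).getD m c) ≥ u ls[m] ls[m] := by
    intro m hm
    obtain ⟨h0, hi⟩ : (∀ h : 0 < ls.length, (fun z w => u c w ≥ u c z ∧ u w z ≥ u w w) c (ls.get ⟨0, h⟩)) ∧
        ∀ (i : ℕ) (h : i < ls.length - 1), (fun z w => u c w ≥ u c z ∧ u w z ≥ u w w)
          (ls.get ⟨i, by omega⟩) (ls.get ⟨i + 1, by omega⟩) := by
      have hc' := List.isChain_iff_getElem.mp (show List.IsChain (fun z w => u c w ≥ u c z ∧ u w z ≥ u w w) (c :: ls) from hch)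
      exact ⟨fun h => by simpa using hc' 0 (by simp; omega), fun i h => hc' (i + 1) (by simp; omega)⟩
    rcases Nat.eq_zero_or_pos m with rfl | hpos
    · have := h0 (by omega)
      simpa [List.get_eq_getElem] using this
    · obtain ⟨m', rfl⟩ : ∃ m', m = m' + 1 := ⟨m - 1, by omega⟩
      have := hi m' (by omega)
      simp only [List.get_eq_getElem] at this
      have hgd : (c :: ls).getD (m' + 1) c = ls[m'] := by
        simp [List.getD_cons_succ, List.getElem?_eq_getElem (by omega : m' < ls.length)]
      rw [hgd]
      exact this
  refine ⟨ls.length, τ, by simp [hτ], ?_, ?_, ?_⟩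
  · -- WeakSwapSeq
    intro m hm
    refine ⟨c, ls[m], ⟨Or.inl rfl, fun h => hcnot (h ▸ List.getElem_mem hm)⟩, ?_, ?_, hstep m hm⟩
    · rw [fixes' m ls[m] (fun h => hcnot (h ▸ List.getElem_mem hm)) (hgetnot m hm),
        hcenter m (by omega)]
      exact (hR m hm).1
    · rw [fixes' m ls[m] (fun h => hcnot (h ▸ List.getElem_mem hm)) (hgetnot m hm),
        hcenter m (by omega)]
      exact (hR m hm).2
  · -- simplicity
    intro a ha
    rw [Finset.card_le_one]
    have key : ∀ m ∈ (Finset.range ls.length).filter (fun m => τ (m + 1) a ≠ τ m a),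
        ∃ hm : m < ls.length, ls[m] = a := by
      intro m hmem
      obtain ⟨hm, hne⟩ := Finset.mem_filter.mp hmem
      rw [Finset.mem_range] at hm
      refine ⟨hm, ?_⟩
      rw [hstep m hm, Equiv.Perm.mul_apply] at hne
      have : Equiv.swap c ls[m] a ≠ a := fun h => hne (by rw [h])
      rcases Equiv.eq_or_eq_of_swap_apply_ne_self this with h | h
      · exact absurd h ha
      · exact h.symm
    intro m1 hm1 m2 hm2
    obtain ⟨h1, e1⟩ := key m1 hm1
    obtain ⟨h2, e2⟩ := key m2 hm2
    exact (List.Nodup.getElem_inj_iff hnd').mp (e1.trans e2.symm)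
  · -- final object
    rw [hcenter ls.length le_rfl, ← hlast]
    rw [List.getLast_eq_getElem]
    simp [List.getD_eq_getElem (c :: ls) c (by simp : ls.length < (c :: ls).length)]

/-- 0-indexed: `o_1` is object `0`, the center agent is `n-1`: in a star with
weak preferences, if object `o_1` is reachable for the center agent, then there is a simple
sequence of swaps (each leaf participates in at most one swap) ending with the center
holding `o_1`. -/
theorem star_center_simple_sequence {n : ℕ} (hn : 1 < n)
    (u : Fin n → Fin n → ℕ)
    (h : WReachableObj (starAdj ⟨n - 1, by omega⟩) u ⟨n - 1, by omega⟩ ⟨0, by omega⟩) :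
    ∃ t σseq, σseq 0 = 1 ∧ WeakSwapSeq (starAdj ⟨n - 1, by omega⟩) u σseq t ∧
      (∀ a : Fin n, a ≠ ⟨n - 1, by omega⟩ →
        ((Finset.range t).filter (fun m => σseq (m + 1) a ≠ σseq m a)).card ≤ 1) ∧
      σseq t ⟨n - 1, by omega⟩ = ⟨0, by omega⟩ := by
  obtain ⟨t, σseq, h0, hs, hend⟩ := h
  obtain ⟨ls, hnd, hch, hlast, -⟩ :=
    star_chain h0 hs t le_rfl ⟨0, by omega⟩ ⟨t, le_rfl, hend⟩
  exact star_build ls hnd hch hlast
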